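/- arXiv:2601.20743 — 4 statements merged into one kernel-verified Lean document; each statement's English description precedes it below -/
import Mathlib

section
/- Let t ≥ 2 be an integer and (n_k)_{k≥1} a strictly increasing sequence of positive integers with limsup_{k→∞} n_{k+1}/n_k = ∞. Then the number ∑_{k≥1} t^{-n_k} is transcendental. -/
open Filter

private lemma add_le_apply_of_strictMono {n : ℕ → ℕ} (h : StrictMono n) (a i : ℕ) :
    n a + i ≤ n (a + i) := by
  induction i with
  | zero => simp
  | succ i ih =>
    have h1 : n (a + i) + 1 ≤ n (a + i + 1) := h (Nat.lt_succ_self _)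
    rw [show a + (i + 1) = a + i + 1 from rfl]
    omega

set_option maxHeartbeats 1000000 in
private lemma liouville_aux (t : ℕ) (ht : 2 ≤ t) (n : ℕ → ℕ)
    (hmono : StrictMono n) (hpos : ∀ k, 1 ≤ n k)
    (hlac : ∀ C : ℝ, ∃ᶠ k : ℕ in Filter.atTop, C * (n k : ℝ) < (n (k + 1) : ℝ)) :
    Liouville (∑' k : ℕ, (1 : ℝ) / t ^ n k) := by
  have hT : (2 : ℝ) ≤ (t : ℝ) := by exact_mod_cast ht
  have hT0 : (0 : ℝ) < t := lt_of_lt_of_le two_pos hT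
  have hT1 : (1 : ℝ) < t := lt_of_lt_of_le one_lt_two hT
  have hinv : (1 : ℝ) / t < 1 := by
    rw [div_lt_one hT0]; exact hT1
  have hinv0 : (0 : ℝ) ≤ 1 / t := by positivity
  -- summability
  have hsum : Summable (fun k : ℕ => (1 : ℝ) / t ^ n k) := by
    apply Summable.of_nonneg_of_le (fun k => by positivity)
      (fun k => ?_) (summable_geometric_of_lt_one hinv0 hinv)
    rw [div_pow, one_pow]
    exact one_div_le_one_div_of_le (by positivity) (pow_le_pow_right₀ hT1.le hmono.le_apply)
  intro m
  obtain ⟨k, hk⟩ := (hlac (m + 1 : ℕ)).exists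
  -- key numeric inequality
  have hkey : (m + 1) * n k < n (k + 1) := by exact_mod_cast hk
  have hab : ((∑ i ∈ Finset.range (k + 1), (t : ℤ) ^ (n k - n i) : ℤ) : ℝ) /
      (((t : ℤ) ^ n k : ℤ) : ℝ) = ∑ i ∈ Finset.range (k + 1), (1 : ℝ) / t ^ n i := by
    push_cast
    rw [Finset.sum_div]
    refine Finset.sum_congr rfl fun i hi => ?_
    have hle : n i ≤ n k := hmono.monotone (Nat.lt_succ_iff.mp (Finset.mem_range.mp hi))
    rw [div_eq_div_iff (by positivity) (by positivity), one_mul, ← pow_add]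
    congr 1
    omega
  have hsplit : (∑' j : ℕ, (1 : ℝ) / t ^ n j) -
      ((∑ i ∈ Finset.range (k + 1), (t : ℤ) ^ (n k - n i) : ℤ) : ℝ) /
      (((t : ℤ) ^ n k : ℤ) : ℝ) = ∑' j : ℕ, (1 : ℝ) / t ^ n (j + (k + 1)) := by
    rw [hab, sub_eq_iff_eq_add']
    exact (Summable.sum_add_tsum_nat_add (k + 1) hsum).symm
  have hrsum : Summable (fun j : ℕ => (1 : ℝ) / t ^ n (j + (k + 1))) :=
    (summable_nat_add_iff (k + 1)).mpr hsum
  have hrpos : 0 < ∑' j : ℕ, (1 : ℝ) / t ^ n (j + (k + 1)) :=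
    Summable.tsum_pos hrsum (fun j => by positivity) 0 (by positivity)
  have hgsum : Summable (fun j : ℕ => (1 : ℝ) / t ^ (n (k + 1) + j)) := by
    simpa [pow_add, div_pow, ← div_div, div_eq_mul_inv, mul_comm] using
      (summable_geometric_of_lt_one hinv0 hinv).mul_left ((1 : ℝ) / t ^ n (k + 1))
  have hrle : (∑' j : ℕ, (1 : ℝ) / t ^ n (j + (k + 1))) ≤ 2 / t ^ n (k + 1) := by
    have h1 : (∑' j : ℕ, (1 : ℝ) / t ^ n (j + (k + 1))) ≤
        ∑' j : ℕ, (1 : ℝ) / t ^ (n (k + 1) + j) := by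
      refine Summable.tsum_le_tsum (fun j => ?_) hrsum hgsum
      apply one_div_le_one_div_of_le (by positivity)
      apply pow_le_pow_right₀ hT1.le
      rw [Nat.add_comm j (k + 1)]
      exact add_le_apply_of_strictMono hmono (k + 1) j
    have h2 : (∑' j : ℕ, (1 : ℝ) / t ^ (n (k + 1) + j)) =
        (1 / t ^ n (k + 1)) * (1 - 1 / (t : ℝ))⁻¹ := by
      rw [← tsum_geometric_of_lt_one hinv0 hinv, ← tsum_mul_left]
      congr 1 with j
      rw [pow_add, div_pow, one_pow, div_mul_div_comm, one_mul]
    have h3 : (1 - 1 / (t : ℝ))⁻¹ ≤ 2 := by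
      rw [inv_le_comm₀ (by rw [sub_pos]; exact hinv) two_pos]
      have : (1 : ℝ) / t ≤ 1 / 2 := one_div_le_one_div_of_le two_pos hT
      linarith
    calc (∑' j : ℕ, (1 : ℝ) / t ^ n (j + (k + 1)))
        ≤ (1 / t ^ n (k + 1)) * (1 - 1 / (t : ℝ))⁻¹ := h1.trans h2.le
      _ ≤ (1 / t ^ n (k + 1)) * 2 := by
          apply mul_le_mul_of_nonneg_left h3 (by positivity)
      _ = 2 / t ^ n (k + 1) := by ring
  refine ⟨∑ i ∈ Finset.range (k + 1), (t : ℤ) ^ (n k - n i), (t : ℤ) ^ n k, ?_, ?_, ?_⟩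
  · exact one_lt_pow₀ (by exact_mod_cast ht) (Nat.one_le_iff_ne_zero.mp (hpos k))
  · intro heq
    rw [heq, sub_self] at hsplit
    exact absurd hsplit.symm (ne_of_gt hrpos)
  · rw [hsplit, abs_of_pos hrpos]
    refine lt_of_le_of_lt hrle ?_
    have hb : (((t : ℤ) ^ n k : ℤ) : ℝ) ^ m = (t : ℝ) ^ (m * n k) := by
      push_cast
      rw [← pow_mul, mul_comm]
    rw [hb, div_lt_div_iff₀ (by positivity) (by positivity), one_mul]
    have hexp : m * n k + 2 ≤ n (k + 1) := by
      have := hpos k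
      nlinarith [hkey]
    have h4 : (4 : ℝ) ≤ (t : ℝ) ^ 2 := by nlinarith [hT]
    calc (2 : ℝ) * t ^ (m * n k) < t ^ 2 * t ^ (m * n k) := by
          nlinarith [pow_pos hT0 (m * n k), h4]
      _ = t ^ (m * n k + 2) := by rw [← pow_add]; ring_nf
      _ ≤ t ^ n (k + 1) := pow_le_pow_right₀ hT1.le hexp

theorem stmt2 (t : ℕ) (ht : 2 ≤ t) (n : ℕ → ℕ)
    (hmono : StrictMono n) (hpos : ∀ k, 1 ≤ n k)
    (hlac : ∀ C : ℝ, ∃ᶠ k : ℕ in Filter.atTop, C * (n k : ℝ) < (n (k + 1) : ℝ)) :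
    Transcendental ℚ (∑' k : ℕ, (1 : ℝ) / t ^ n k) := by
  have h := (liouville_aux t ht n hmono hpos hlac).transcendental
  intro halg
  exact h ((IsFractionRing.isAlgebraic_iff ℤ ℚ ℝ).mpr halg)
end

section
/- Let (c(n))_{n≥1} be a sequence of complex numbers, q > 1 a real number, and suppose ∑_{n≥1} |c(n)|/q^n converges. Suppose there are sequences (x_n), (w_n), (z_n) of reals ≥ 1 and η ∈ (0,1] with: x_n → ∞; #{m < x_n : c(m) ≠ 0} = o(x_n/z_n); and ∑_{N < η x_n} ∑_{j ≥ z_n} |c(N+j)|/q^j = o(x_n/w_n). Then for every fixed δ > 0, #{N ∈ [1, η x_n) ∩ ℤ : w_n · ∑_{j≥0} |c(N+j)|/q^j < δ} = η x_n + o(x_n) as n → ∞. -/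
open Filter Asymptotics
set_option maxHeartbeats 1000000

private lemma shift_summable {c : ℕ → ℂ} {q : ℝ} (hq : 1 < q)
    (hsum : Summable (fun n : ℕ => ‖c n‖ / q ^ n)) (N : ℕ) :
    Summable (fun j : ℕ => ‖c (N + j)‖ / q ^ j) := by
  have hq0 : (0:ℝ) < q := lt_trans one_pos hq
  have h1 : Summable (fun j : ℕ => ‖c (N + j)‖ / q ^ (N + j)) :=
    hsum.comp_injective (add_right_injective N)
  refine (h1.mul_left (q ^ N)).congr (fun j => ?_)
  rw [pow_add]
  field_simp

private lemma wmul_isLittleO {x w f : ℕ → ℝ} (hw1 : ∀ n, 1 ≤ w n) (hx1 : ∀ n, 1 ≤ x n)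
    (h : f =o[atTop] (fun n => x n / w n)) :
    (fun n => w n * f n) =o[atTop] (fun n => x n) := by
  rw [isLittleO_iff] at h ⊢
  intro ε hε
  filter_upwards [h hε] with n hn
  have hw0 : (0:ℝ) < w n := lt_of_lt_of_le one_pos (hw1 n)
  have hx0 : (0:ℝ) < x n := lt_of_lt_of_le one_pos (hx1 n)
  rw [norm_mul, Real.norm_of_nonneg hw0.le]
  have h2 : ‖x n / w n‖ = x n / w n := Real.norm_of_nonneg (by positivity)
  rw [h2] at hn
  have := mul_le_mul_of_nonneg_left hn hw0.le
  calc w n * ‖f n‖ ≤ w n * (ε * (x n / w n)) := this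
    _ = ε * (x n) := by field_simp
    _ ≤ ε * ‖x n‖ := by rw [Real.norm_of_nonneg hx0.le]

theorem stmt3 (c : ℕ → ℂ) (q : ℝ) (hq : 1 < q)
    (hsum : Summable (fun n : ℕ => ‖c n‖ / q ^ n))
    (x w z : ℕ → ℝ) (hx1 : ∀ n, 1 ≤ x n) (hw1 : ∀ n, 1 ≤ w n) (hz1 : ∀ n, 1 ≤ z n)
    (η : ℝ) (hη0 : 0 < η) (hη1 : η ≤ 1)
    (hxto : Tendsto x atTop atTop)
    (hsparse : (fun n : ℕ => (Nat.card {m : ℕ | 1 ≤ m ∧ (m : ℝ) < x n ∧ c m ≠ 0} : ℝ))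
      =o[atTop] (fun n : ℕ => x n / z n))
    (hR : (fun n : ℕ => ∑ N ∈ Finset.Ico 1 ⌈η * x n⌉₊, ∑' j : ℕ,
        if z n ≤ (j : ℝ) then ‖c (N + j)‖ / q ^ j else 0)
      =o[atTop] (fun n : ℕ => x n / w n)) :
    ∀ δ : ℝ, 0 < δ →
      (fun n : ℕ => (Nat.card {N : ℕ | 1 ≤ N ∧ (N : ℝ) < η * x n ∧
          w n * ∑' j : ℕ, ‖c (N + j)‖ / q ^ j < δ} : ℝ) - η * x n)
        =o[atTop] (fun n : ℕ => x n) := by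
  intro δ hδ
  classical
  have hq0 : (0:ℝ) < q := lt_trans one_pos hq
  -- basic notation
  set ξ : ℕ → ℝ := fun N => ∑' j : ℕ, ‖c (N + j)‖ / q ^ j with hξdef
  set T : ℕ → ℕ → ℝ := fun n N => ∑' j : ℕ, if z n ≤ (j:ℝ) then ‖c (N + j)‖ / q ^ j else 0
    with hTdef
  set H : ℕ → ℕ → ℝ := fun n N => ∑' j : ℕ, if (j:ℝ) < z n then ‖c (N + j)‖ / q ^ j else 0
    with hHdef
  have hsummT : ∀ n N, Summable (fun j : ℕ => if z n ≤ (j:ℝ) then ‖c (N + j)‖ / q ^ j else 0) := by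
    intro n N
    refine Summable.of_nonneg_of_le (fun j => ?_) (fun j => ?_) (shift_summable hq hsum N)
    · split <;> positivity
    · split
      · exact le_rfl
      · positivity
  have hsummH : ∀ n N, Summable (fun j : ℕ => if (j:ℝ) < z n then ‖c (N + j)‖ / q ^ j else 0) := by
    intro n N
    refine Summable.of_nonneg_of_le (fun j => ?_) (fun j => ?_) (shift_summable hq hsum N)
    · split <;> positivity
    · split
      · exact le_rfl
      · positivity
  have hTnn : ∀ n N, 0 ≤ T n N := by
    intro n N
    refine tsum_nonneg (fun j => ?_)
    split <;> positivity
  have hHnn : ∀ n N, 0 ≤ H n N := by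
    intro n N
    refine tsum_nonneg (fun j => ?_)
    split <;> positivity
  have hsplit : ∀ n N, ξ N = H n N + T n N := by
    intro n N
    rw [hHdef, hTdef, ← Summable.tsum_add (hsummH n N) (hsummT n N)]
    refine tsum_congr (fun j => ?_)
    rcases lt_or_ge ((j:ℝ)) (z n) with h | h
    · simp [h, not_le.mpr h]
    · simp [h, not_lt.mpr h]
  -- finsets
  set I : ℕ → Finset ℕ := fun n => Finset.Ico 1 ⌈η * x n⌉₊ with hIdef
  set G : ℕ → Finset ℕ := fun n => (I n).filter (fun N => w n * ξ N < δ) with hGdef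
  set B : ℕ → Finset ℕ := fun n => (I n).filter (fun N => ¬ (w n * ξ N < δ)) with hBdef
  set M : ℕ → Finset ℕ := fun n => (I n).filter (fun N => δ / 2 ≤ w n * T n N) with hMdef
  set Hs : ℕ → Finset ℕ := fun n =>
    (I n).filter (fun N => ∃ j : ℕ, (j:ℝ) < z n ∧ c (N + j) ≠ 0) with hHsdef
  set A : ℕ → Finset ℕ := fun n => (Finset.Ico 1 ⌈x n⌉₊).filter (fun m => c m ≠ 0) with hAdef
  -- rewrite the goal's Nat.card
  have hNatG : ∀ n, (Nat.card {N : ℕ | 1 ≤ N ∧ (N : ℝ) < η * x n ∧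
      w n * ∑' j : ℕ, ‖c (N + j)‖ / q ^ j < δ} : ℝ) = ((G n).card : ℝ) := by
    intro n
    congr 1
    have : {N : ℕ | 1 ≤ N ∧ (N : ℝ) < η * x n ∧
        w n * ∑' j : ℕ, ‖c (N + j)‖ / q ^ j < δ} = ↑(G n) := by
      ext N
      simp only [hGdef, hIdef, Finset.coe_filter, Finset.mem_Ico, Set.mem_setOf_eq,
        Nat.lt_ceil]
      tauto
    rw [this, Nat.card_coe_set_eq, Set.ncard_coe_finset]
  -- rewrite hsparse's Nat.card
  have hNatA : ∀ n, (Nat.card {m : ℕ | 1 ≤ m ∧ (m : ℝ) < x n ∧ c m ≠ 0} : ℝ)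
      = ((A n).card : ℝ) := by
    intro n
    congr 1
    have : {m : ℕ | 1 ≤ m ∧ (m : ℝ) < x n ∧ c m ≠ 0} = ↑(A n) := by
      ext m
      simp only [hAdef, Finset.coe_filter, Finset.mem_Ico, Set.mem_setOf_eq, Nat.lt_ceil]
      tauto
    rw [this, Nat.card_coe_set_eq, Set.ncard_coe_finset]
  have hsparse' : (fun n : ℕ => ((A n).card : ℝ)) =o[atTop] (fun n : ℕ => x n / z n) := by
    refine hsparse.congr' ?_ (EventuallyEq.refl _ _)
    exact Eventually.of_forall (fun n => hNatA n)
  -- little-o facts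
  have hzA : (fun n => z n * ((A n).card : ℝ)) =o[atTop] (fun n => x n) :=
    wmul_isLittleO hz1 hx1 hsparse'
  have hwR : (fun n => w n * ∑ N ∈ I n, T n N) =o[atTop] (fun n => x n) :=
    wmul_isLittleO hw1 hx1 hR
  -- card of I
  have hIcard : ∀ n, |((I n).card : ℝ) - η * x n| ≤ 1 := by
    intro n
    have hx0 : (0:ℝ) < x n := lt_of_lt_of_le one_pos (hx1 n)
    have hηx : (0:ℝ) < η * x n := by positivity
    have h1 : (1 : ℕ) ≤ ⌈η * x n⌉₊ := by
      rw [Nat.one_le_ceil_iff]; exact hηx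
    have hcard : (I n).card = ⌈η * x n⌉₊ - 1 := by
      rw [hIdef]; simp [Nat.card_Ico]
    have hcast : ((I n).card : ℝ) = (⌈η * x n⌉₊ : ℝ) - 1 := by
      rw [hcard, Nat.cast_sub h1, Nat.cast_one]
    have hle : η * x n ≤ (⌈η * x n⌉₊ : ℝ) := Nat.le_ceil _
    have hlt : (⌈η * x n⌉₊ : ℝ) < η * x n + 1 := Nat.ceil_lt_add_one hηx.le
    rw [hcast, abs_le]
    constructor <;> linarith
  -- B bounded by M ∪ Hs
  have hBsub : ∀ n, B n ⊆ M n ∪ Hs n := by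
    intro n N hN
    rw [hBdef, Finset.mem_filter] at hN
    obtain ⟨hNI, hNbad⟩ := hN
    push_neg at hNbad
    have hw0 : (0:ℝ) < w n := lt_of_lt_of_le one_pos (hw1 n)
    have hsp := hsplit n N
    rcases le_or_gt (δ / 2) (w n * T n N) with hc | hc
    · exact Finset.mem_union_left _ (Finset.mem_filter.mpr ⟨hNI, hc⟩)
    · have hH2 : δ / 2 ≤ w n * H n N := by nlinarith [hTnn n N, hHnn n N]
      have hHpos : 0 < H n N := by nlinarith
      refine Finset.mem_union_right _ (Finset.mem_filter.mpr ⟨hNI, ?_⟩)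
      by_contra hno
      push_neg at hno
      have : H n N = 0 := by
        rw [hHdef]
        have hz0 : (fun j : ℕ => if (j:ℝ) < z n then ‖c (N + j)‖ / q ^ j else 0)
            = fun _ : ℕ => (0:ℝ) := by
          funext j
          by_cases hj : (j:ℝ) < z n
          · simp [hj, hno j hj]
          · simp [hj]
        simp only []
        rw [hz0, tsum_zero]
      linarith
  -- Markov bound on M
  have hMcard : ∀ n, ((M n).card : ℝ) ≤ (2 / δ) * (w n * ∑ N ∈ I n, T n N) := by
    intro n
    have hw0 : (0:ℝ) < w n := lt_of_lt_of_le one_pos (hw1 n)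
    have h1 : ((M n).card : ℝ) * (δ / 2) ≤ ∑ N ∈ M n, w n * T n N := by
      have := Finset.card_nsmul_le_sum (M n) (fun N => w n * T n N) (δ / 2)
        (fun N hN => (Finset.mem_filter.mp hN).2)
      simpa [nsmul_eq_mul] using this
    have h2 : ∑ N ∈ M n, w n * T n N ≤ ∑ N ∈ I n, w n * T n N := by
      refine Finset.sum_le_sum_of_subset_of_nonneg (Finset.filter_subset _ _) ?_
      intro i _ _
      have := hTnn n i
      positivity
    have h3 : ∑ N ∈ I n, w n * T n N = w n * ∑ N ∈ I n, T n N := by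
      rw [Finset.mul_sum]
    have h4 : ((M n).card : ℝ) * (δ / 2) ≤ w n * ∑ N ∈ I n, T n N := by
      rw [← h3]; exact le_trans h1 h2
    have h5 : ((M n).card : ℝ) = (2 / δ) * (((M n).card : ℝ) * (δ / 2)) := by
      field_simp
    calc ((M n).card : ℝ) = (2 / δ) * (((M n).card : ℝ) * (δ / 2)) := h5
      _ ≤ (2 / δ) * (w n * ∑ N ∈ I n, T n N) := by
        apply mul_le_mul_of_nonneg_left h4 (by positivity)
  -- Hs card bound
  have hHscard : ∀ n, ((Hs n).card : ℝ) ≤ ((A n).card : ℝ) * ⌈z n⌉₊ + ⌈z n⌉₊ := by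
    intro n
    set K := ⌈z n⌉₊ with hK
    have hsub : Hs n ⊆ (A n).biUnion (fun m => Finset.Ico (m + 1 - K) (m + 1))
        ∪ Finset.Ico (⌈x n⌉₊ - K) ⌈x n⌉₊ := by
      intro N hN
      rw [hHsdef, Finset.mem_filter, hIdef, Finset.mem_Ico] at hN
      obtain ⟨⟨hN1, hN2⟩, j, hjz, hcj⟩ := hN
      have hjK : j < K := Nat.lt_ceil.mpr hjz
      have hNx : (N:ℝ) < x n := by
        have h1 : (N:ℝ) < η * x n := Nat.lt_ceil.mp hN2
        have hx0 : (0:ℝ) < x n := lt_of_lt_of_le one_pos (hx1 n)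
        nlinarith
      rcases lt_or_ge (N + j) ⌈x n⌉₊ with hm | hm
      · refine Finset.mem_union_left _ (Finset.mem_biUnion.mpr ⟨N + j, ?_, ?_⟩)
        · rw [hAdef, Finset.mem_filter, Finset.mem_Ico]
          exact ⟨⟨le_trans hN1 (Nat.le_add_right N j), hm⟩, hcj⟩
        · rw [Finset.mem_Ico]
          omega
      · refine Finset.mem_union_right _ ?_
        rw [Finset.mem_Ico]
        have hNlt : N < ⌈x n⌉₊ := Nat.lt_ceil.mpr hNx
        omega
    calc ((Hs n).card : ℝ) ≤ (((A n).biUnion (fun m => Finset.Ico (m + 1 - K) (m + 1))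
          ∪ Finset.Ico (⌈x n⌉₊ - K) ⌈x n⌉₊).card : ℝ) := by
          exact_mod_cast Finset.card_le_card hsub
      _ ≤ (((A n).biUnion (fun m => Finset.Ico (m + 1 - K) (m + 1))).card : ℝ)
          + ((Finset.Ico (⌈x n⌉₊ - K) ⌈x n⌉₊).card : ℝ) := by
          exact_mod_cast Finset.card_union_le _ _
      _ ≤ ((A n).card : ℝ) * K + K := by
          have h1 : ((A n).biUnion (fun m => Finset.Ico (m + 1 - K) (m + 1))).card
              ≤ (A n).card * K := by
            refine le_trans (Finset.card_biUnion_le) ?_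
            refine le_trans (Finset.sum_le_card_nsmul _ _ K (fun m _ => ?_)) (by simp [mul_comm])
            rw [Nat.card_Ico]; omega
          have h2 : (Finset.Ico (⌈x n⌉₊ - K) ⌈x n⌉₊).card ≤ K := by
            rw [Nat.card_Ico]; omega
          have h1' : (((A n).biUnion (fun m => Finset.Ico (m + 1 - K) (m + 1))).card : ℝ)
              ≤ ((A n).card : ℝ) * K := by exact_mod_cast h1
          have h2' : ((Finset.Ico (⌈x n⌉₊ - K) ⌈x n⌉₊).card : ℝ) ≤ (K : ℝ) := by exact_mod_cast h2
          linarith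
  -- eventual bound on Hs card
  have hHsev : ∀ᶠ n in atTop, ((Hs n).card : ℝ) ≤ 4 * (z n * ((A n).card : ℝ)) := by
    by_cases hc : ∀ m : ℕ, 1 ≤ m → c m = 0
    · refine Eventually.of_forall (fun n => ?_)
      have : Hs n = ∅ := by
        rw [hHsdef]
        refine Finset.filter_false_of_mem (fun N hN => ?_)
        rw [hIdef, Finset.mem_Ico] at hN
        push_neg
        intro j _
        exact hc (N + j) (le_trans hN.1 (Nat.le_add_right N j))
      rw [this]
      simp only [Finset.card_empty, Nat.cast_zero]
      have hz0 : (0:ℝ) ≤ z n := le_trans zero_le_one (hz1 n)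
      positivity
    · push_neg at hc
      obtain ⟨m0, hm0, hcm0⟩ := hc
      have hev : ∀ᶠ n in atTop, (m0 : ℝ) < x n := hxto.eventually (eventually_gt_atTop (m0:ℝ))
      filter_upwards [hev] with n hxn
      have hm0A : m0 ∈ A n := by
        rw [hAdef, Finset.mem_filter, Finset.mem_Ico]
        exact ⟨⟨hm0, Nat.lt_ceil.mpr hxn⟩, hcm0⟩
      have hA1 : (1:ℝ) ≤ ((A n).card : ℝ) := by
        have : 1 ≤ (A n).card := Finset.card_pos.mpr ⟨m0, hm0A⟩
        exact_mod_cast this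
      have hz0 : (1:ℝ) ≤ z n := hz1 n
      have hK : ((⌈z n⌉₊ : ℕ) : ℝ) ≤ z n + 1 := (Nat.ceil_lt_add_one (by linarith)).le
      have := hHscard n
      nlinarith [(Nat.cast_nonneg (A n).card : (0:ℝ) ≤ ((A n).card : ℝ)),
        (Nat.cast_nonneg ⌈z n⌉₊ : (0:ℝ) ≤ ((⌈z n⌉₊ : ℕ) : ℝ))]
  -- little-o for Hs card
  have hHo : (fun n => ((Hs n).card : ℝ)) =o[atTop] (fun n => x n) := by
    refine IsBigO.trans_isLittleO (IsBigO.of_bound 4 ?_) hzA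
    filter_upwards [hHsev] with n hn
    have h1 : ‖((Hs n).card : ℝ)‖ = ((Hs n).card : ℝ) :=
      Real.norm_of_nonneg (Nat.cast_nonneg _)
    have hz0 : (0:ℝ) ≤ z n := le_trans zero_le_one (hz1 n)
    have h2 : ‖z n * ((A n).card : ℝ)‖ = z n * ((A n).card : ℝ) :=
      Real.norm_of_nonneg (by positivity)
    rw [h1, h2]
    exact hn
  -- little-o for M card
  have hMo : (fun n => ((M n).card : ℝ)) =o[atTop] (fun n => x n) := by
    refine IsBigO.trans_isLittleO (IsBigO.of_bound (2/δ) ?_) hwR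
    refine Eventually.of_forall (fun n => ?_)
    have h1 : ‖((M n).card : ℝ)‖ = ((M n).card : ℝ) :=
      Real.norm_of_nonneg (Nat.cast_nonneg _)
    have hw0 : (0:ℝ) < w n := lt_of_lt_of_le one_pos (hw1 n)
    have hRnn : 0 ≤ ∑ N ∈ I n, T n N := Finset.sum_nonneg (fun N _ => hTnn n N)
    have h2 : ‖w n * ∑ N ∈ I n, T n N‖ = w n * ∑ N ∈ I n, T n N :=
      Real.norm_of_nonneg (by positivity)
    rw [h1, h2]
    exact hMcard n
  -- B card bound
  have hBMH : ∀ n, ((B n).card : ℝ) ≤ ((M n).card : ℝ) + ((Hs n).card : ℝ) := by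
    intro n
    have h1 : (B n).card ≤ (M n ∪ Hs n).card := Finset.card_le_card (hBsub n)
    have h2 : (M n ∪ Hs n).card ≤ (M n).card + (Hs n).card := Finset.card_union_le _ _
    exact_mod_cast le_trans h1 h2
  -- G + B = I
  have hGB : ∀ n, ((G n).card : ℝ) + ((B n).card : ℝ) = ((I n).card : ℝ) := by
    intro n
    have h := Finset.card_filter_add_card_filter_not
      (s := I n) (p := fun N => w n * ξ N < δ)
    rw [hGdef, hBdef]
    have h2 : ((Finset.filter (fun N => w n * ξ N < δ) (I n)).card
        + (Finset.filter (fun N => ¬ w n * ξ N < δ) (I n)).card : ℕ) = (I n).card := by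
      convert h using 3
    exact_mod_cast h2
  -- constant is little-o
  have h1o : (fun _ : ℕ => (1:ℝ)) =o[atTop] (fun n => x n) := by
    refine isLittleO_const_left.mpr (Or.inr ?_)
    have : Tendsto (fun n => |x n|) atTop atTop := tendsto_abs_atTop_atTop.comp hxto
    simpa [Function.comp_def, Real.norm_eq_abs] using this
  -- combine
  have hcombo : (fun n : ℕ => 1 + (((M n).card : ℝ) + ((Hs n).card : ℝ)))
      =o[atTop] (fun n => x n) := h1o.add (hMo.add hHo)
  have hgoal_eq : (fun n : ℕ => (Nat.card {N : ℕ | 1 ≤ N ∧ (N : ℝ) < η * x n ∧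
      w n * ∑' j : ℕ, ‖c (N + j)‖ / q ^ j < δ} : ℝ) - η * x n)
      = (fun n : ℕ => ((G n).card : ℝ) - η * x n) := by
    funext n
    rw [hNatG n]
  rw [hgoal_eq]
  refine IsBigO.trans_isLittleO (IsBigO.of_bound 1 ?_) hcombo
  refine Eventually.of_forall (fun n => ?_)
  have hB0 : (0:ℝ) ≤ ((B n).card : ℝ) := Nat.cast_nonneg _
  have hM0 : (0:ℝ) ≤ ((M n).card : ℝ) := Nat.cast_nonneg _
  have hH0 : (0:ℝ) ≤ ((Hs n).card : ℝ) := Nat.cast_nonneg _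
  have hI := hIcard n
  have hGBn := hGB n
  have hBMHn := hBMH n
  rw [abs_le] at hI
  have hnorm2 : ‖1 + (((M n).card : ℝ) + ((Hs n).card : ℝ))‖
      = 1 + (((M n).card : ℝ) + ((Hs n).card : ℝ)) := Real.norm_of_nonneg (by linarith)
  rw [Real.norm_eq_abs, hnorm2, one_mul, abs_le]
  constructor <;> linarith
end

section
/- Let A = {n³ : n ∈ ℤ_{≥0}} and let S = A + A be the set of sums of two nonnegative cubes. Then the number ∑_{n ∈ S, n ≥ 1} 2^{-n} + ∑_{n ≥ 1} 2^{-n³} is irrational. -/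
open scoped Classical

noncomputable def cc (n : ℕ) : ℕ :=
  (if 1 ≤ n ∧ ∃ a b : ℕ, n = a ^ 3 + b ^ 3 then 1 else 0) +
  (if ∃ k : ℕ, n = (k + 1) ^ 3 then 1 else 0)

lemma cc_le_two (n : ℕ) : cc n ≤ 2 := by
  unfold cc; split <;> split <;> omega

lemma cc_pos_iff {n : ℕ} (h : cc n ≠ 0) : 1 ≤ n ∧ ∃ a b : ℕ, n = a ^ 3 + b ^ 3 := by
  unfold cc at h
  split at h
  · assumption
  · split at h
    · rename_i hk; obtain ⟨k, rfl⟩ := hk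
      exact ⟨Nat.one_le_iff_ne_zero.2 (by positivity), ⟨k + 1, 0, by ring⟩⟩
    · simp at h

lemma cc_cube (k : ℕ) : 1 ≤ cc ((k + 1) ^ 3) := by
  unfold cc
  have : ∃ k' : ℕ, (k + 1) ^ 3 = (k' + 1) ^ 3 := ⟨k, rfl⟩
  rw [if_pos this]; omega

lemma summable_cc : Summable (fun n => (cc n : ℝ) / 2 ^ n) := by
  apply Summable.of_nonneg_of_le (fun n => by positivity) (fun n => ?_)
    (summable_geometric_two.mul_left 2)
  have h : (cc n : ℝ) ≤ 2 := by exact_mod_cast cc_le_two n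
  have h2 : (2:ℝ) * (1/2) ^ n = 2 / 2 ^ n := by
    rw [one_div, inv_pow, ← one_div, mul_one_div]
  rw [h2]
  gcongr

-- gap lemma
lemma gap_lemma (g : ℕ) : ∃ N : ℕ, ∀ n, N < n → n ≤ N + g → ∀ a b : ℕ, n ≠ a ^ 3 + b ^ 3 := by
  by_contra hcon
  push_neg at hcon
  -- hcon : ∀ N, ∃ n, N < n ∧ n ≤ N + g ∧ ∃ a b, n = a^3 + b^3
  have hg : 1 ≤ g := by
    by_contra hg
    obtain ⟨n, h1, h2, _⟩ := hcon 0
    omega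
  set K : ℕ := (g + 2) ^ 6 + 1 with hK
  set R : ℕ := (g + 2) ^ 3 with hR
  have hc : ∀ N : ℕ, ∃ n, N < n ∧ n ≤ N + g ∧ ∃ a b : ℕ, n = a ^ 3 + b ^ 3 := by
    intro N
    obtain ⟨n, h1, h2, a, b, h3⟩ := hcon N
    exact ⟨n, h1, h2, a, b, h3⟩
  choose u hu1 hu2 hu3 using hc
  set v : ℕ → ℕ := fun j => u (j * g) with hv
  have hmono : StrictMono v := by
    intro i j hij
    have h1 : v i ≤ i * g + g := hu2 _
    have h2 : j * g < v j := hu1 _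
    have : i * g + g ≤ j * g := by
      have : i + 1 ≤ j := hij
      calc i * g + g = (i + 1) * g := by ring
        _ ≤ j * g := Nat.mul_le_mul_right g this
    omega
  set T : Finset ℕ := Finset.image (fun p : ℕ × ℕ => p.1 ^ 3 + p.2 ^ 3)
      (Finset.range R ×ˢ Finset.range R) with hT
  have hsub : Finset.image v (Finset.range K) ⊆ T := by
    intro x hx
    simp only [Finset.mem_image, Finset.mem_range] at hx
    obtain ⟨j, hj, rfl⟩ := hx
    obtain ⟨a, b, hab⟩ := hu3 (j * g)
    have hle : v j ≤ K * g := by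
      have h1 : v j ≤ j * g + g := hu2 _
      have : j * g + g ≤ K * g := by
        have : j + 1 ≤ K := hj
        calc j * g + g = (j + 1) * g := by ring
          _ ≤ K * g := Nat.mul_le_mul_right g this
      omega
    have hKg : K * g < R ^ 3 := by
      have : R ^ 3 = (g + 2) ^ 9 := by rw [hR, ← pow_mul]
      rw [this, hK]
      have h1 : g + 2 ≤ (g + 2) ^ 3 := Nat.le_self_pow (by norm_num) _
      have h36 : (g + 2) ^ 3 ≤ (g + 2) ^ 6 := Nat.pow_le_pow_right (by omega) (by norm_num)
      have key : (g + 2) * (g + 2) ^ 6 ≤ (g + 2) ^ 3 * (g + 2) ^ 6 :=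
        Nat.mul_le_mul_right _ h1
      have hg6 : g < (g + 2) ^ 6 := by omega
      have h9 : (g + 2) ^ 9 = (g + 2) ^ 3 * (g + 2) ^ 6 := by ring
      nlinarith [key, hg6]
    have habv : v j = a ^ 3 + b ^ 3 := hab
    have ha : a < R := by
      by_contra h
      push_neg at h
      have : R ^ 3 ≤ a ^ 3 := Nat.pow_le_pow_left h 3
      omega
    have hb : b < R := by
      by_contra h
      push_neg at h
      have : R ^ 3 ≤ b ^ 3 := Nat.pow_le_pow_left h 3
      omega
    simp only [hT, Finset.mem_image, Finset.mem_product, Finset.mem_range]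
    exact ⟨(a, b), ⟨ha, hb⟩, hab.symm⟩
  have hcard1 : (Finset.image v (Finset.range K)).card = K := by
    rw [Finset.card_image_of_injective _ hmono.injective, Finset.card_range]
  have hcard2 : T.card ≤ R * R := by
    calc T.card ≤ ((Finset.range R) ×ˢ (Finset.range R)).card := Finset.card_image_le
      _ = R * R := by rw [Finset.card_product, Finset.card_range]
  have : K ≤ R * R := by
    calc K = (Finset.image v (Finset.range K)).card := hcard1.symm
      _ ≤ T.card := Finset.card_le_card hsub
      _ ≤ R * R := hcard2
  have : R * R = (g + 2) ^ 6 := by rw [hR]; ring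
  omega

lemma summable_bd {f : ℕ → ℝ} (h0 : ∀ n, 0 ≤ f n) (h1 : ∀ n, f n ≤ 1) :
    Summable (fun n : ℕ => f n / 2 ^ n) := by
  apply Summable.of_nonneg_of_le (fun n => div_nonneg (h0 n) (by positivity))
    (fun n => ?_) summable_geometric_two
  rw [one_div, inv_pow, ← one_div]
  exact div_le_div₀ (by norm_num) (h1 n) (by positivity) (le_refl _)

set_option maxHeartbeats 1000000 in
theorem stmt8 :
    Irrational ((∑' n : ℕ, Set.indicator
        {m : ℕ | 1 ≤ m ∧ ∃ a b : ℕ, m = a ^ 3 + b ^ 3} (fun m => (1 : ℝ) / 2 ^ m) n) +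
      ∑' n : ℕ, (1 : ℝ) / 2 ^ ((n + 1) ^ 3)) := by
  have h1 : (∑' n : ℕ, Set.indicator
        {m : ℕ | 1 ≤ m ∧ ∃ a b : ℕ, m = a ^ 3 + b ^ 3} (fun m => (1 : ℝ) / 2 ^ m) n)
      = ∑' n : ℕ, (if 1 ≤ n ∧ ∃ a b : ℕ, n = a ^ 3 + b ^ 3 then (1:ℝ) else 0) / 2 ^ n := by
    apply tsum_congr; intro n
    rw [Set.indicator_apply]
    simp only [Set.mem_setOf_eq]
    split_ifs
    · rw [one_div]
    · rw [zero_div]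
  have h2 : (∑' n : ℕ, (1:ℝ) / 2 ^ ((n + 1) ^ 3))
      = ∑' n : ℕ, (if ∃ k : ℕ, n = (k + 1) ^ 3 then (1:ℝ) else 0) / 2 ^ n := by
    have hinj : Function.Injective (fun k : ℕ => (k + 1) ^ 3) := by
      intro a b h
      simp only at h
      have := Nat.pow_left_injective (by norm_num : (3:ℕ) ≠ 0) h
      omega
    have hsupp : Function.support
        (fun n : ℕ => (if ∃ k : ℕ, n = (k + 1) ^ 3 then (1:ℝ) else 0) / 2 ^ n)
        ⊆ Set.range (fun k : ℕ => (k + 1) ^ 3) := by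
      intro n hn
      by_contra hr
      apply hn
      show (if ∃ k : ℕ, n = (k + 1) ^ 3 then (1:ℝ) else 0) / 2 ^ n = 0
      rw [if_neg, zero_div]
      rintro ⟨k, hk⟩
      exact hr ⟨k, hk.symm⟩
    rw [← hinj.tsum_eq hsupp]
    apply tsum_congr; intro k
    show (1:ℝ) / 2 ^ ((k + 1) ^ 3)
        = (if ∃ k' : ℕ, (k + 1) ^ 3 = (k' + 1) ^ 3 then (1:ℝ) else 0) / 2 ^ ((k + 1) ^ 3)
    rw [if_pos ⟨k, rfl⟩]
  have s1 : Summable (fun n : ℕ =>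
      (if 1 ≤ n ∧ ∃ a b : ℕ, n = a ^ 3 + b ^ 3 then (1:ℝ) else 0) / 2 ^ n) :=
    summable_bd (fun n => by split_ifs <;> norm_num) (fun n => by split_ifs <;> norm_num)
  have s2 : Summable (fun n : ℕ =>
      (if ∃ k : ℕ, n = (k + 1) ^ 3 then (1:ℝ) else 0) / 2 ^ n) :=
    summable_bd (fun n => by split_ifs <;> norm_num) (fun n => by split_ifs <;> norm_num)
  have hx : (∑' n : ℕ, Set.indicator
        {m : ℕ | 1 ≤ m ∧ ∃ a b : ℕ, m = a ^ 3 + b ^ 3} (fun m => (1 : ℝ) / 2 ^ m) n)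
      + (∑' n : ℕ, (1:ℝ) / 2 ^ ((n + 1) ^ 3)) = ∑' n : ℕ, (cc n : ℝ) / 2 ^ n := by
    rw [h1, h2, ← Summable.tsum_add s1 s2]
    apply tsum_congr; intro n
    rw [← add_div]
    congr 1
    unfold cc
    push_cast
    split_ifs <;> norm_num
  rw [hx]
  rintro ⟨r, hr⟩
  have hq : 0 < r.den := r.pos
  set q : ℕ := r.den with hqdef
  set g : ℕ := q + 3 with hgdef
  obtain ⟨N, hN⟩ := gap_lemma g
  set F : ℕ → ℝ := fun n => (cc n : ℝ) / 2 ^ n with hF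
  have hFs : Summable F := summable_cc
  have hFtail : Summable (fun i => F (i + (N + 1))) := (summable_nat_add_iff (N + 1)).2 hFs
  set T : ℝ := ∑' i : ℕ, F (i + (N + 1)) with hT
  have hsplit : (∑ i ∈ Finset.range (N + 1), F i) + T = ∑' n, F n :=
    Summable.sum_add_tsum_nat_add (N + 1) hFs
  have hTpos : 0 < T := by
    have hterm : ∀ i, 0 ≤ F (i + (N + 1)) := fun i => by
      rw [hF]; positivity
    have hkey : 0 < F (((N + 1) ^ 3 - (N + 1)) + (N + 1)) := by
      have hle : N + 1 ≤ (N + 1) ^ 3 := Nat.le_self_pow (by norm_num) _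
      have heq : ((N + 1) ^ 3 - (N + 1)) + (N + 1) = (N + 1) ^ 3 := by omega
      rw [hF]
      show 0 < (cc ((((N + 1) ^ 3 - (N + 1)) + (N + 1))) : ℝ) / 2 ^ ((((N + 1) ^ 3 - (N + 1)) + (N + 1)))
      rw [heq]
      have h1 : 1 ≤ cc ((N + 1) ^ 3) := cc_cube N
      have h1' : (1:ℝ) ≤ (cc ((N + 1) ^ 3) : ℝ) := by exact_mod_cast h1
      positivity
    exact Summable.tsum_pos hFtail hterm _ hkey
  -- tail upper bound
  have hTle : T ≤ 4 * (1 / 2 : ℝ) ^ (g + N + 1) := by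
    have hFtail2 : Summable (fun i => F (i + g + (N + 1))) := by
      have := (summable_nat_add_iff g).2 hFtail
      simpa [add_assoc] using this
    have hzero : ∀ i ∈ Finset.range g, F (i + (N + 1)) = 0 := by
      intro i hi
      simp only [Finset.mem_range] at hi
      rw [hF]
      show (cc (i + (N + 1)) : ℝ) / 2 ^ (i + (N + 1)) = 0
      have hcc : cc (i + (N + 1)) = 0 := by
        by_contra h
        obtain ⟨_, a, b, hab⟩ := cc_pos_iff h
        exact hN (i + (N + 1)) (by omega) (by omega) a b hab
      rw [hcc]
      norm_num
    have hsplit2 : (∑ i ∈ Finset.range g, F (i + (N + 1)))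
        + (∑' i : ℕ, F (i + g + (N + 1))) = T := by
      rw [hT]
      have := Summable.sum_add_tsum_nat_add g hFtail
      simpa [add_assoc] using this
    have hfin : (∑ i ∈ Finset.range g, F (i + (N + 1))) = 0 :=
      Finset.sum_eq_zero hzero
    have hTeq : T = ∑' i : ℕ, F (i + g + (N + 1)) := by
      rw [← hsplit2, hfin, zero_add]
    rw [hTeq]
    have hbound : ∀ i : ℕ,
        F (i + g + (N + 1)) ≤ 2 * (1 / 2 : ℝ) ^ (g + N + 1) * (1 / 2) ^ i := by
      intro i
      rw [hF]
      show (cc (i + g + (N + 1)) : ℝ) / 2 ^ (i + g + (N + 1))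
          ≤ 2 * (1 / 2 : ℝ) ^ (g + N + 1) * (1 / 2) ^ i
      have h1 : (cc (i + g + (N + 1)) : ℝ) ≤ 2 := by exact_mod_cast cc_le_two _
      have h2 : (2:ℝ) * (1 / 2) ^ (g + N + 1) * (1 / 2) ^ i = 2 / 2 ^ (i + g + (N + 1)) := by
        rw [mul_assoc, ← pow_add, one_div, inv_pow, ← one_div, mul_one_div]
        congr 2
        omega
      rw [h2]
      gcongr
    have hsumr : Summable (fun i : ℕ => 2 * (1 / 2 : ℝ) ^ (g + N + 1) * (1 / 2) ^ i) :=
      summable_geometric_two.mul_left _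
    calc (∑' i : ℕ, F (i + g + (N + 1)))
        ≤ ∑' i : ℕ, 2 * (1 / 2 : ℝ) ^ (g + N + 1) * (1 / 2) ^ i :=
          Summable.tsum_le_tsum hbound hFtail2 hsumr
      _ = 2 * (1 / 2 : ℝ) ^ (g + N + 1) * ∑' i : ℕ, (1 / 2 : ℝ) ^ i := tsum_mul_left
      _ = 4 * (1 / 2 : ℝ) ^ (g + N + 1) := by rw [tsum_geometric_two]; ring
  -- integrality
  set W : ℕ := ∑ i ∈ Finset.range (N + 1), cc i * 2 ^ (N - i) with hW
  have hP : (2:ℝ) ^ N * (∑ i ∈ Finset.range (N + 1), F i) = (W : ℝ) := by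
    rw [hW, Finset.mul_sum]
    push_cast
    apply Finset.sum_congr rfl
    intro i hi
    simp only [Finset.mem_range] at hi
    have hiN : i ≤ N := by omega
    rw [hF]
    show (2:ℝ) ^ N * ((cc i : ℝ) / 2 ^ i) = (cc i : ℝ) * 2 ^ (N - i)
    have hpow : (2:ℝ) ^ (N - i) * 2 ^ i = 2 ^ N := by
      rw [← pow_add, Nat.sub_add_cancel hiN]
    field_simp
    rw [mul_assoc, mul_comm ((2:ℝ) ^ i), hpow, mul_comm]
  have hxq : (q:ℝ) * (∑' n, F n) = (r.num : ℝ) := by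
    have h := Rat.mul_den_eq_num r
    have h' : (r:ℝ) * (r.den:ℝ) = (r.num:ℝ) := by
      exact_mod_cast congrArg (fun x : ℚ => (x:ℝ)) h
    rw [← hr, hqdef]
    linarith
  set z : ℤ := 2 ^ N * r.num - (q : ℤ) * (W : ℤ) with hzdef
  have hz : (z:ℝ) = (q:ℝ) * 2 ^ N * T := by
    have hTx : T = (∑' n, F n) - (∑ i ∈ Finset.range (N + 1), F i) := by linarith [hsplit]
    rw [hzdef]
    push_cast
    rw [hTx, mul_sub]
    rw [show (q:ℝ) * 2 ^ N * (∑' n, F n) = 2 ^ N * ((q:ℝ) * ∑' n, F n) by ring, hxq]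
    rw [show (q:ℝ) * 2 ^ N * (∑ i ∈ Finset.range (N + 1), F i)
        = (q:ℝ) * ((2:ℝ) ^ N * ∑ i ∈ Finset.range (N + 1), F i) by ring, hP]
  have hq' : (0:ℝ) < (q:ℝ) := by exact_mod_cast hq
  have hz1 : (1:ℝ) ≤ (z:ℝ) := by
    have h0 : (0:ℝ) < (z:ℝ) := by
      rw [hz]
      positivity
    have : 0 < z := by exact_mod_cast h0
    exact_mod_cast this
  have hzlt : (z:ℝ) < 1 := by
    rw [hz]
    have hc : (2:ℝ) ^ N * (1 / 2) ^ (g + N + 1) = (1 / 2) ^ (g + 1) := by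
      have hexp : g + N + 1 = N + (g + 1) := by omega
      rw [hexp, pow_add, ← mul_assoc, one_div, inv_pow, mul_inv_cancel₀ (by positivity), one_mul,
        ← one_div]
    have step1 : (q:ℝ) * 2 ^ N * T ≤ (q:ℝ) * 2 ^ N * (4 * (1 / 2) ^ (g + N + 1)) := by
      gcongr
    have step2 : (q:ℝ) * 2 ^ N * (4 * (1 / 2) ^ (g + N + 1)) = 4 * q * (1 / 2) ^ (g + 1) := by
      rw [show (q:ℝ) * 2 ^ N * (4 * (1 / 2) ^ (g + N + 1))
          = 4 * q * ((2:ℝ) ^ N * (1 / 2) ^ (g + N + 1)) by ring, hc]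
    have hq2 : (q:ℝ) < 2 ^ q := by exact_mod_cast (Nat.lt_two_pow_self (n := q))
    have h2q : (0:ℝ) < 2 ^ q := by positivity
    have step3 : 4 * (q:ℝ) * (1 / 2) ^ (g + 1) < 1 := by
      rw [one_div, inv_pow, ← one_div, mul_one_div, div_lt_one (by positivity)]
      have h2g : (2:ℝ) ^ (g + 1) = 16 * 2 ^ q := by
        rw [hgdef, show q + 3 + 1 = q + 4 by omega, pow_add]
        ring
      rw [h2g]
      linarith
    linarith
  linarith
end

section
/- Let q > 1 be a Pisot or Salem number of degree d over ℚ, K = ℚ(q) with ring of integers O_K, and let (c(n)) be a sequence of elements of O_K with ∑ house(c(n))/q^n < ∞. Suppose ξ := ∑_{n≥1} c(n)/q^n lies in K, say ξ = γ/u with γ ∈ O_K and u ∈ ℤ_{≥1}. Then for every N with ξ_N := q^N ∑_{n≥N} c(n)/q^n ≠ 0, one has 1 ≤ |N_{K/ℚ}(u ξ_N)| and |N_{K/ℚ}(u ξ_N)| = O(ξ_N(|c|) · S_c(N)^{d-1}) as N → ∞, where ξ_N(|c|) = ∑_{j≥0} |c(N+j)|/q^j and S_c(N) = ∑_{n<N}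 house(c(n)). -/
open Filter Asymptotics Polynomial IntermediateField

set_option maxHeartbeats 1000000

/-- The house of a real algebraic number: the maximum absolute value of the
complex roots of its minimal polynomial over `ℚ` (its Galois conjugates). -/
noncomputable def house (x : ℝ) : ℝ :=
  sSup ((fun z : ℂ => ‖z‖) '' {z : ℂ | Polynomial.aeval z (minpoly ℚ x) = 0})

lemma house_aux {x : ℝ} (hx : IsIntegral ℚ x) {z : ℂ}
    (hz : Polynomial.aeval z (minpoly ℚ x) = 0) : ‖z‖ ≤ house x := by
  have hne : minpoly ℚ x ≠ 0 := minpoly.ne_zero hx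
  have hset : {z : ℂ | Polynomial.aeval z (minpoly ℚ x) = 0} = (minpoly ℚ x).rootSet ℂ := by
    ext w; simp [Polynomial.mem_rootSet, hne]
  apply le_csSup
  · rw [hset]; exact ((Polynomial.rootSet_finite _ _).image _).bddAbove
  · exact ⟨z, hz, rfl⟩

lemma abs_le_house {x : ℝ} (hx : IsIntegral ℚ x) : |x| ≤ house x := by
  have h0 : Polynomial.aeval ((x : ℂ)) (minpoly ℚ x) = 0 := by
    rw [show ((x : ℂ)) = algebraMap ℝ ℂ x from rfl, Polynomial.aeval_algebraMap_apply]
    simp [minpoly.aeval ℚ x]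
  simpa using house_aux hx h0

lemma house_nonneg {x : ℝ} (hx : IsIntegral ℚ x) : 0 ≤ house x :=
  le_trans (abs_nonneg x) (abs_le_house hx)

lemma conj_le_house {K : IntermediateField ℚ ℝ} (σ : K →ₐ[ℚ] ℂ) {y : K}
    (hy : IsIntegral ℚ ((y : ℝ))) : ‖σ y‖ ≤ house ((y : ℝ)) := by
  apply house_aux hy
  have h1 : minpoly ℚ ((y : ℝ)) = minpoly ℚ y := by
    rw [show ((y : ℝ)) = algebraMap K ℝ y from rfl]
    exact minpoly.algebraMap_eq (algebraMap K ℝ).injective y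
  rw [h1, Polynomial.aeval_algHom_apply, minpoly.aeval, map_zero]

lemma intk_int {K : IntermediateField ℚ ℝ} {y : K} (hy : IsIntegral ℤ y) :
    IsIntegral ℚ ((y : ℝ)) := by
  have : IsIntegral ℤ ((y : ℝ)) := hy.map (IsScalarTower.toAlgHom ℤ K ℝ)
  exact this.tower_top

theorem stmt19 (q : ℝ) (hq1 : 1 < q) (hqint : IsIntegral ℤ q)
    (hconj : ∀ z : ℂ, Polynomial.aeval z (minpoly ℚ q) = 0 → z ≠ (q : ℂ) →
      ‖z‖ ≤ 1)
    (d : ℕ) (hd : d = (minpoly ℚ q).natDegree)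
    (K : IntermediateField ℚ ℝ) (hK : K = ℚ⟮q⟯)
    (c : ℕ → K) (hcint : ∀ n, IsIntegral ℤ (c n))
    (hsum : Summable (fun n : ℕ => house ((c n : ℝ)) / q ^ n))
    (γ : K) (hγ : IsIntegral ℤ γ) (u : ℕ) (hu : 1 ≤ u)
    (hξ : (γ : ℝ) = u * ∑' n : ℕ, ((c (n + 1) : ℝ)) / q ^ (n + 1))
    (qK : K) (hqK : (qK : ℝ) = q) :
    (∀ N : ℕ, 1 ≤ N → (∑' j : ℕ, ((c (N + j) : ℝ)) / q ^ j) ≠ 0 →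
      1 ≤ |Algebra.norm ℚ
        (qK ^ N * γ - (u : K) * ∑ n ∈ Finset.Ico 1 N, c n * qK ^ (N - n))|) ∧
    IsBigO atTop
      (fun N : ℕ => ((|Algebra.norm ℚ
        (qK ^ N * γ - (u : K) * ∑ n ∈ Finset.Ico 1 N, c n * qK ^ (N - n))| : ℚ) : ℝ))
      (fun N : ℕ => (∑' j : ℕ, |(c (N + j) : ℝ)| / q ^ j) *
        (∑ n ∈ Finset.Ico 1 N, house ((c n : ℝ))) ^ (d - 1)) := by
  subst hK
  have hq0 : (0:ℝ) < q := lt_trans one_pos hq1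
  have hqne : q ≠ 0 := ne_of_gt hq0
  have hqQ : IsIntegral ℚ q := hqint.tower_top
  haveI : FiniteDimensional ℚ (ℚ⟮q⟯ : IntermediateField ℚ ℝ) :=
    IntermediateField.adjoin.finiteDimensional hqQ
  have hqKint : IsIntegral ℤ qK := by
    refine (isIntegral_algebraMap_iff (algebraMap (ℚ⟮q⟯ : IntermediateField ℚ ℝ) ℝ).injective).mp ?_
    rw [show algebraMap (ℚ⟮q⟯ : IntermediateField ℚ ℝ) ℝ qK = q from hqK]
    exact hqint
  -- summability of the coefficient series
  have hs0 : Summable (fun n : ℕ => ((c n : ℝ)) / q ^ n) := by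
    refine Summable.of_norm_bounded hsum fun n => ?_
    rw [Real.norm_eq_abs, abs_div, abs_pow, abs_of_pos hq0]
    gcongr
    exact abs_le_house (intk_int (hcint n))
  have hsabs : ∀ N : ℕ, Summable (fun j : ℕ => |((c (N + j) : ℝ))| / q ^ j) := by
    intro N
    have h1 : Summable (fun j : ℕ => house ((c (j + N) : ℝ)) / q ^ (j + N)) :=
      (summable_nat_add_iff N).mpr hsum
    refine Summable.of_nonneg_of_le (fun j => by positivity) (fun j => ?_) (h1.mul_left (q ^ N))
    have he : q ^ N * (house ((c (j + N) : ℝ)) / q ^ (j + N)) = house ((c (j + N) : ℝ)) / q ^ j := by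
      rw [pow_add]; field_simp
    rw [he, add_comm N j]
    gcongr
    exact abs_le_house (intk_int (hcint _))
  have hstail : ∀ N : ℕ, Summable (fun j : ℕ => ((c (N + j) : ℝ)) / q ^ j) := by
    intro N
    refine Summable.of_norm_bounded (hsabs N) fun j => ?_
    rw [Real.norm_eq_abs, abs_div, abs_pow, abs_of_pos hq0]
  -- the key identity for the real embedding
  have key : ∀ N : ℕ, 1 ≤ N →
      (((qK ^ N * γ - (u : (ℚ⟮q⟯ : IntermediateField ℚ ℝ)) *
        ∑ n ∈ Finset.Ico 1 N, c n * qK ^ (N - n)) : (ℚ⟮q⟯ : IntermediateField ℚ ℝ)) : ℝ)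
        = u * ∑' j : ℕ, ((c (N + j) : ℝ)) / q ^ j := by
    intro N hN
    obtain ⟨M, rfl⟩ : ∃ M, N = M + 1 := ⟨N - 1, (Nat.succ_pred_eq_of_pos hN).symm⟩
    have hcoe : (((qK ^ (M+1) * γ - (u : (ℚ⟮q⟯ : IntermediateField ℚ ℝ)) *
        ∑ n ∈ Finset.Ico 1 (M+1), c n * qK ^ (M+1 - n)) : (ℚ⟮q⟯ : IntermediateField ℚ ℝ)) : ℝ)
        = q ^ (M+1) * (γ : ℝ) - u * ∑ n ∈ Finset.Ico 1 (M+1), ((c n : ℝ)) * q ^ (M+1 - n) := by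
      push_cast [hqK]
      ring
    rw [hcoe, hξ]
    have hg : Summable (fun n : ℕ => ((c (n+1) : ℝ)) / q ^ (n+1)) :=
      (summable_nat_add_iff 1).mpr hs0
    have e1 : (∑' n : ℕ, ((c (n+1) : ℝ)) / q ^ (n+1))
        = (∑ i ∈ Finset.range M, ((c (i+1) : ℝ)) / q ^ (i+1))
          + ∑' i : ℕ, ((c (i+M+1) : ℝ)) / q ^ (i+M+1) :=
      (Summable.sum_add_tsum_nat_add M hg).symm
    have e2 : q ^ (M+1) * ∑' i : ℕ, ((c (i+M+1) : ℝ)) / q ^ (i+M+1)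
        = ∑' j : ℕ, ((c (M+1+j) : ℝ)) / q ^ j := by
      rw [← tsum_mul_left]
      refine tsum_congr fun i => ?_
      rw [show i + M + 1 = M + 1 + i by omega, pow_add]
      field_simp
      ring
    have e3 : q ^ (M+1) * ∑ i ∈ Finset.range M, ((c (i+1) : ℝ)) / q ^ (i+1)
        = ∑ n ∈ Finset.Ico 1 (M+1), ((c n : ℝ)) * q ^ (M+1 - n) := by
      rw [Finset.mul_sum, Finset.sum_Ico_eq_sum_range]
      simp only [Nat.add_sub_cancel]
      refine Finset.sum_congr rfl fun i hi => ?_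
      rw [Finset.mem_range] at hi
      rw [show 1 + i = i + 1 by omega]
      have hpow : q ^ (M+1) = q ^ (M+1-(i+1)) * q ^ (i+1) := by
        rw [← pow_add]; congr 1; omega
      rw [hpow]
      field_simp
    rw [e1]
    calc q ^ (M+1) * (↑u * ((∑ i ∈ Finset.range M, ((c (i+1) : ℝ)) / q ^ (i+1))
            + ∑' i : ℕ, ((c (i+M+1) : ℝ)) / q ^ (i+M+1)))
          - ↑u * ∑ n ∈ Finset.Ico 1 (M+1), ((c n : ℝ)) * q ^ (M+1 - n)
        = ↑u * (q ^ (M+1) * ∑' i : ℕ, ((c (i+M+1) : ℝ)) / q ^ (i+M+1))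
          + ↑u * ((q ^ (M+1) * ∑ i ∈ Finset.range M, ((c (i+1) : ℝ)) / q ^ (i+1))
            - ∑ n ∈ Finset.Ico 1 (M+1), ((c n : ℝ)) * q ^ (M+1 - n)) := by ring
      _ = ↑u * ∑' j : ℕ, ((c (M+1+j) : ℝ)) / q ^ j := by rw [e2, e3]; ring
  -- integrality of the key element
  have hxint : ∀ N : ℕ, IsIntegral ℤ
      ((qK ^ N * γ - (u : (ℚ⟮q⟯ : IntermediateField ℚ ℝ)) *
        ∑ n ∈ Finset.Ico 1 N, c n * qK ^ (N - n))) := by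
    intro N
    refine IsIntegral.sub ((hqKint.pow N).mul hγ) (IsIntegral.mul ?_ ?_)
    · have : ((u : (ℚ⟮q⟯ : IntermediateField ℚ ℝ))) = algebraMap ℤ _ (u : ℤ) := by
        push_cast; simp
      rw [this]; exact isIntegral_algebraMap
    · exact IsIntegral.sum _ fun n _ => (hcint n).mul (hqKint.pow _)
  have huR : ((u : ℝ)) ≠ 0 := Nat.cast_ne_zero.mpr (by omega)
  -- nonvanishing / part 1
  have part1 : ∀ N : ℕ, 1 ≤ N → (∑' j : ℕ, ((c (N + j) : ℝ)) / q ^ j) ≠ 0 →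
      1 ≤ |Algebra.norm ℚ
        (qK ^ N * γ - (u : (ℚ⟮q⟯ : IntermediateField ℚ ℝ)) *
          ∑ n ∈ Finset.Ico 1 N, c n * qK ^ (N - n))| := by
    intro N hN htail
    set x := qK ^ N * γ - (u : (ℚ⟮q⟯ : IntermediateField ℚ ℝ)) *
      ∑ n ∈ Finset.Ico 1 N, c n * qK ^ (N - n) with hxdef
    have hxne : x ≠ 0 := by
      intro h0
      have hk := key N hN
      rw [← hxdef, h0] at hk
      simp only [ZeroMemClass.coe_zero] at hk
      exact htail ((mul_eq_zero.mp hk.symm).resolve_left huR)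
    have hnne : Algebra.norm ℚ x ≠ 0 := by
      rw [Algebra.norm_ne_zero_iff]; exact hxne
    obtain ⟨m, hm⟩ := IsIntegrallyClosed.isIntegral_iff.mp (Algebra.isIntegral_norm ℚ (hxint N))
    have hm' : ((m : ℚ)) = Algebra.norm ℚ x := by rw [← hm]; simp
    have hm0 : m ≠ 0 := by rintro rfl; rw [← hm'] at hnne; simp at hnne
    rw [← hm']
    exact_mod_cast Int.one_le_abs hm0
  refine ⟨part1, ?_⟩
  -- the distinguished real embedding
  classical
  set σ₀ : (ℚ⟮q⟯ : IntermediateField ℚ ℝ) →ₐ[ℚ] ℂ :=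
    (Complex.ofRealHom.comp (algebraMap (ℚ⟮q⟯ : IntermediateField ℚ ℝ) ℝ)).toRatAlgHom
    with hσ₀def
  have hσ₀ : ∀ y : (ℚ⟮q⟯ : IntermediateField ℚ ℝ), σ₀ y = ((y : ℝ) : ℂ) := fun y => rfl
  have hqKgen : qK = IntermediateField.AdjoinSimple.gen ℚ q := by
    apply Subtype.ext
    rw [hqK]
    exact (IntermediateField.AdjoinSimple.algebraMap_gen ℚ q).symm
  have huniq : ∀ σ : (ℚ⟮q⟯ : IntermediateField ℚ ℝ) →ₐ[ℚ] ℂ, σ qK = (q : ℂ) → σ = σ₀ := by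
    intro σ hσ
    refine (IntermediateField.adjoin.powerBasis hqQ).algHom_ext ?_
    rw [IntermediateField.adjoin.powerBasis_gen, ← hqKgen]
    exact hσ.trans ((hσ₀ qK).trans (congrArg (fun r : ℝ => (r : ℂ)) hqK)).symm
  have hqconj : ∀ σ : (ℚ⟮q⟯ : IntermediateField ℚ ℝ) →ₐ[ℚ] ℂ, σ ≠ σ₀ →
      ‖σ qK‖ ≤ 1 := by
    intro σ hne
    refine hconj _ ?_ (fun h => hne (huniq σ h))
    have h1 : minpoly ℚ qK = minpoly ℚ q := by
      have h2 := minpoly.algebraMap_eq (A := ℚ)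
        (algebraMap (ℚ⟮q⟯ : IntermediateField ℚ ℝ) ℝ).injective qK
      rw [show algebraMap (ℚ⟮q⟯ : IntermediateField ℚ ℝ) ℝ qK = q from hqK] at h2
      exact h2.symm
    rw [← h1, Polynomial.aeval_algHom_apply, minpoly.aeval, map_zero]
  have hcard : Fintype.card ((ℚ⟮q⟯ : IntermediateField ℚ ℝ) →ₐ[ℚ] ℂ) = d := by
    rw [AlgHom.card, IntermediateField.adjoin.finrank hqQ, hd]
  have hnorm : ∀ x : (ℚ⟮q⟯ : IntermediateField ℚ ℝ),
      |((Algebra.norm ℚ x : ℚ) : ℝ)| = ∏ σ : (ℚ⟮q⟯ : IntermediateField ℚ ℝ) →ₐ[ℚ] ℂ,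
        ‖σ x‖ := by
    intro x
    have h := Algebra.norm_eq_prod_embeddings ℚ ℂ x
    have h2 := congrArg Norm.norm h
    rw [norm_prod] at h2
    rw [← h2]
    rw [show (algebraMap ℚ ℂ) (Algebra.norm ℚ x) = (((Algebra.norm ℚ x : ℚ) : ℝ) : ℂ) by
      push_cast; simp]
    exact (Complex.norm_real _).symm
  -- Part 2
  by_cases hc0 : ∀ n : ℕ, 1 ≤ n → c n = 0
  · -- degenerate case: all coefficients vanish
    have hγ0 : γ = 0 := by
      have h0 : ((γ : ℝ)) = 0 := by
        rw [hξ, show (∑' n : ℕ, ((c (n+1) : ℝ)) / q ^ (n+1)) = 0 from by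
          rw [show (fun n : ℕ => ((c (n+1) : ℝ)) / q ^ (n+1)) = fun _ => (0:ℝ) from
            funext fun n => by rw [hc0 (n+1) (by omega)]; simp]
          exact tsum_zero, mul_zero]
      exact_mod_cast h0
    have hLHS : (fun N : ℕ => ((|Algebra.norm ℚ
        (qK ^ N * γ - (u : (ℚ⟮q⟯ : IntermediateField ℚ ℝ)) *
          ∑ n ∈ Finset.Ico 1 N, c n * qK ^ (N - n))| : ℚ) : ℝ)) = fun _ => (0:ℝ) := by
      funext N
      have hx0 : qK ^ N * γ - (u : (ℚ⟮q⟯ : IntermediateField ℚ ℝ)) *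
          ∑ n ∈ Finset.Ico 1 N, c n * qK ^ (N - n) = 0 := by
        rw [hγ0, Finset.sum_eq_zero fun n hn => by
          rw [hc0 n (Finset.mem_Ico.mp hn).1]; exact zero_mul _]
        ring
      rw [hx0]
      simp
    rw [hLHS]
    exact isBigO_zero _ _
  · push_neg at hc0
    obtain ⟨m, hm1, hmne⟩ := hc0
    have hcmR : ((c m : ℝ)) ≠ 0 := fun h => hmne (by exact_mod_cast h)
    have hε : 0 < house ((c m : ℝ)) :=
      lt_of_lt_of_le (abs_pos.mpr hcmR) (abs_le_house (intk_int (hcint m)))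
    set ε := house ((c m : ℝ)) with hεdef
    set A := house ((γ : ℝ)) with hAdef
    have hA0 : 0 ≤ A := house_nonneg (intk_int hγ)
    set B := A / ε + u with hBdef
    have hB0 : 0 ≤ B := by positivity
    refine IsBigO.of_bound (u * B ^ (d-1)) ?_
    filter_upwards [eventually_ge_atTop (m+1)] with N hNm
    have hN1 : 1 ≤ N := by omega
    set x := qK ^ N * γ - (u : (ℚ⟮q⟯ : IntermediateField ℚ ℝ)) *
      ∑ n ∈ Finset.Ico 1 N, c n * qK ^ (N - n) with hxdef
    set S := ∑ n ∈ Finset.Ico 1 N, house ((c n : ℝ)) with hSdef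
    set T := ∑' j : ℕ, |((c (N + j) : ℝ))| / q ^ j with hTdef
    have hT0 : 0 ≤ T := tsum_nonneg fun j => by positivity
    have hεS : ε ≤ S :=
      Finset.single_le_sum (fun i _ => house_nonneg (intk_int (hcint i)))
        (Finset.mem_Ico.mpr ⟨hm1, by omega⟩)
    have hSpos : 0 < S := lt_of_lt_of_le hε hεS
    -- bound on the real embedding
    have hb0 : ‖σ₀ x‖ ≤ u * T := by
      rw [hσ₀, Complex.norm_real, Real.norm_eq_abs, key N hN1, abs_mul, Nat.abs_cast]
      have hsn : Summable (fun j : ℕ => ‖((c (N + j) : ℝ)) / q ^ j‖) := by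
        simpa [Real.norm_eq_abs, abs_div, abs_pow, abs_of_pos hq0] using hsabs N
      have h2 : (∑' j : ℕ, ‖((c (N + j) : ℝ)) / q ^ j‖) = T := by
        refine tsum_congr fun j => ?_
        rw [Real.norm_eq_abs, abs_div, abs_pow, abs_of_pos hq0]
      have h3 : |∑' j : ℕ, ((c (N + j) : ℝ)) / q ^ j| ≤ T := by
        rw [← h2, ← Real.norm_eq_abs]
        exact norm_tsum_le_tsum_norm hsn
      exact mul_le_mul_of_nonneg_left h3 (Nat.cast_nonneg u)
    -- bound on the other embeddings
    have hbσ : ∀ σ : (ℚ⟮q⟯ : IntermediateField ℚ ℝ) →ₐ[ℚ] ℂ, σ ≠ σ₀ →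
        ‖σ x‖ ≤ A + u * S := by
      intro σ hne
      have hq1' : ‖σ qK‖ ≤ 1 := hqconj σ hne
      have hexp : σ x = σ qK ^ N * σ γ -
          (u : ℂ) * ∑ n ∈ Finset.Ico 1 N, σ (c n) * σ qK ^ (N - n) := by
        rw [hxdef]
        simp only [map_sub, map_mul, map_pow, map_sum, map_natCast]
      rw [hexp]
      have htri : ‖σ qK ^ N * σ γ -
          (u : ℂ) * ∑ n ∈ Finset.Ico 1 N, σ (c n) * σ qK ^ (N - n)‖ ≤
          ‖σ qK ^ N * σ γ‖ +
          ‖(u : ℂ) * ∑ n ∈ Finset.Ico 1 N, σ (c n) * σ qK ^ (N - n)‖ := by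
        exact norm_sub_le (σ qK ^ N * σ γ)
          ((u : ℂ) * ∑ n ∈ Finset.Ico 1 N, σ (c n) * σ qK ^ (N - n))
      refine le_trans htri (add_le_add ?_ ?_)
      · -- |σ qK ^ N * σ γ| ≤ A
        rw [norm_mul, norm_pow]
        calc ‖σ qK‖ ^ N * ‖σ γ‖
            ≤ 1 * ‖σ γ‖ := by
              gcongr
              exact pow_le_one₀ (norm_nonneg _) hq1'
          _ ≤ A := by rw [one_mul]; exact conj_le_house σ (intk_int hγ)
      · -- |u * ∑ ...| ≤ u * S
        rw [norm_mul, Complex.norm_natCast]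
        refine mul_le_mul_of_nonneg_left ?_ (Nat.cast_nonneg u)
        refine le_trans (norm_sum_le _ _) ?_
        rw [hSdef]
        refine Finset.sum_le_sum fun n hn => ?_
        rw [norm_mul, norm_pow]
        calc ‖σ (c n)‖ * ‖σ qK‖ ^ (N - n)
            ≤ house ((c n : ℝ)) * 1 :=
              mul_le_mul (conj_le_house σ (intk_int (hcint n)))
                (pow_le_one₀ (norm_nonneg _) hq1')
                (pow_nonneg (norm_nonneg _) _)
                (house_nonneg (intk_int (hcint n)))
          _ = house ((c n : ℝ)) := mul_one _
    -- combine everything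
    have hcardE : (Finset.univ.erase σ₀).card = d - 1 := by
      rw [Finset.card_erase_of_mem (Finset.mem_univ _), Finset.card_univ, hcard]
    have hmain : |((Algebra.norm ℚ x : ℚ) : ℝ)| ≤ (u * T) * ((A + u * S) ^ (d-1)) := by
      rw [hnorm x, ← Finset.mul_prod_erase Finset.univ _ (Finset.mem_univ σ₀)]
      have hprod : ∏ σ ∈ Finset.univ.erase σ₀, ‖σ x‖ ≤ (A + u * S) ^ (d-1) := by
        calc ∏ σ ∈ Finset.univ.erase σ₀, ‖σ x‖
          ≤ ∏ _σ ∈ Finset.univ.erase σ₀, (A + u * S) :=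
            Finset.prod_le_prod (fun σ _ => norm_nonneg _)
              (fun σ hσ => hbσ σ (Finset.ne_of_mem_erase hσ))
        _ = (A + u * S) ^ (d - 1) := by rw [Finset.prod_const, hcardE]
      exact mul_le_mul hb0 hprod (Finset.prod_nonneg fun σ _ => norm_nonneg _)
        (by positivity)
    have hAB : A + u * S ≤ B * S := by
      rw [hBdef, add_mul]
      refine add_le_add ?_ le_rfl
      calc A = (A / ε) * ε := by field_simp
        _ ≤ (A / ε) * S := mul_le_mul_of_nonneg_left hεS (by positivity)
    have hfinal : |((Algebra.norm ℚ x : ℚ) : ℝ)| ≤ (u * B ^ (d-1)) * (T * S ^ (d-1)) := by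
      refine le_trans hmain ?_
      calc (u * T) * ((A + u * S) ^ (d-1))
          ≤ (u * T) * ((B * S) ^ (d-1)) :=
            mul_le_mul_of_nonneg_left (pow_le_pow_left₀ (by positivity) hAB _)
              (by positivity)
        _ = (u * B ^ (d-1)) * (T * S ^ (d-1)) := by rw [mul_pow]; ring
    rw [Real.norm_eq_abs, Real.norm_eq_abs]
    rw [show ((|Algebra.norm ℚ x| : ℚ) : ℝ) = |((Algebra.norm ℚ x : ℚ) : ℝ)| by push_cast; rfl]
    rw [abs_abs, abs_of_nonneg (by positivity : (0:ℝ) ≤ T * S ^ (d-1))]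
    exact hfinal
end
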